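/- For g ≥ 3, let Y = (T_1 ∘ T_2 ∘ ⋯ ∘ T_{g−1})^{−1} be the inverse of the composition of the automorphisms T_1,…,T_{g−1} of M(g). Then Y(γ_i) = −γ_{i−1} for 2 ≤ i ≤ g and Y(γ_1) = −γ_g; consequently Y^k(γ_i) = (−1)^k γ_{i−k}, where indices are taken modulo g in {1,…,g}. -/

import Mathlib

/-- `M(g) = ℤ^g / ⟨2(e₁ + ⋯ + e_g)⟩`, i.e. `H_1(N_g; ℤ)`. -/
def MN (g : ℕ) : Type :=
  (Fin g → ℤ) ⧸ AddSubgroup.zmultiples (fun _ => (2 : ℤ) : Fin g → ℤ)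

instance (g : ℕ) : AddCommGroup (MN g) := by unfold MN; infer_instance

/-- `γ_i`, the class of `e_i` in `M(g)` (`i` is a 0-based index). -/
def γ {g : ℕ} (i : Fin g) : MN g :=
  QuotientAddGroup.mk (Pi.single i 1)

/-- The inclusion `Fin (g-1) → Fin g`. -/
def idx {g : ℕ} (i : Fin (g-1)) : Fin g := ⟨i, by have := i.isLt; omega⟩

/-- The successor map `Fin (g-1) → Fin g`, `i ↦ i+1`. -/
def idx1 {g : ℕ} (i : Fin (g-1)) : Fin g := ⟨(i : ℕ) + 1, by have := i.isLt; omega⟩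

/-- The formulas defining the automorphisms `T_i` on the generators `γ_j` of `M(g)`. -/
def IsT {g : ℕ} (T : Fin (g-1) → AddAut (MN g)) : Prop :=
  ∀ i : Fin (g-1),
    T i (γ (idx i)) = - γ (idx1 i) ∧
    T i (γ (idx1 i)) = γ (idx i) + (2 : ℤ) • γ (idx1 i) ∧
    ∀ j : Fin g, j ≠ idx i → j ≠ idx1 i → T i (γ j) = γ j

/-- The formula defining the automorphism `S` on the generators `γ_j` of `M(g)`
(with 1-based index `j`, `S(γ_j) = (-1)^j (2γ_1 + ⋯ + 2γ_{j-1} + γ_j)`). -/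
def IsS {g : ℕ} (S : AddAut (MN g)) : Prop :=
  ∀ j : Fin g,
    S (γ j) = (-1 : ℤ) ^ ((j : ℕ) + 1) • ((2 : ℤ) • (∑ k ∈ Finset.Iio j, γ k) + γ j)

lemma two_sum_gamma (g : ℕ) : (2:ℤ) • ∑ j : Fin g, γ j = (0 : MN g) := by
  have h1 : ∑ j : Fin g, γ j
      = QuotientAddGroup.mk' _ (∑ j : Fin g, Pi.single j (1:ℤ)) := by
    rw [map_sum]; rfl
  rw [h1]
  show (2:ℤ) • (QuotientAddGroup.mk' (AddSubgroup.zmultiples (fun _ => (2:ℤ) : Fin g → ℤ))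
    (∑ j : Fin g, Pi.single j (1:ℤ)) : (Fin g → ℤ) ⧸ AddSubgroup.zmultiples (fun _ => (2:ℤ) : Fin g → ℤ)) = 0
  rw [← map_zsmul (QuotientAddGroup.mk'
      (AddSubgroup.zmultiples (fun _ => (2:ℤ) : Fin g → ℤ))) (2:ℤ)
      (∑ j : Fin g, Pi.single j (1:ℤ))]
  have hmem : ((2:ℤ) • ∑ j : Fin g, Pi.single j (1:ℤ))
      ∈ AddSubgroup.zmultiples (fun _ => (2:ℤ) : Fin g → ℤ) := by
    rw [Finset.univ_sum_single (fun _ : Fin g => (1:ℤ))]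
    have h2 : ((2:ℤ) • fun _ : Fin g => (1:ℤ)) = (fun _ : Fin g => (2:ℤ)) := by
      funext x; simp
    rw [h2]
    exact AddSubgroup.mem_zmultiples _
  exact (QuotientAddGroup.eq_zero_iff _).2 hmem

lemma key {g : ℕ} (T : Fin (g-1) → AddAut (MN g)) (hT : IsT T) :
    ∀ n : ℕ, n ≤ g - 1 → ∀ j : Fin g,
    ((List.ofFn T).drop (g-1-n)).sum (γ j) =
      if (j:ℕ) < g-1-n then γ j
      else if h : (j:ℕ) + 1 < g then -γ ⟨(j:ℕ)+1, h⟩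
      else γ ⟨g-1-n, by have := j.isLt; omega⟩
        + (2:ℤ) • ∑ k ∈ Finset.univ.filter (fun k : Fin g => g - n ≤ (k:ℕ)), γ k := by
  intro n
  induction n with
  | zero =>
    intro _ j
    have hjlt := j.isLt
    rw [List.drop_eq_nil_of_le (by simp), List.sum_nil, AddAut.zero_apply]
    by_cases hj : (j:ℕ) < g - 1 - 0
    · rw [if_pos hj]
    · rw [if_neg hj, dif_neg (by omega)]
      have hfe : Finset.univ.filter (fun k : Fin g => g - 0 ≤ (k:ℕ)) = ∅ := by
        ext k
        simp only [Finset.mem_filter, Finset.mem_univ, true_and, Finset.notMem_empty,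
          iff_false]
        have := k.isLt; omega
      rw [hfe]
      simp only [Finset.sum_empty, smul_zero, add_zero]
      exact congrArg γ (Fin.ext (show (j:ℕ) = g - 1 - 0 by omega))
  | succ n ih =>
    intro hn j
    have hjlt := j.isLt
    have hmlt : g - 1 - (n+1) < (List.ofFn T).length := by simp; omega
    have hmlt' : g - 1 - (n+1) < g - 1 := by omega
    rw [List.drop_eq_getElem_cons hmlt, List.sum_cons, AddAut.add_apply,
      List.getElem_ofFn, show g - 1 - (n+1) + 1 = g - 1 - n by omega, ih (by omega) j]
    obtain ⟨h1, h2, h3⟩ := hT ⟨g - 1 - (n+1), hmlt'⟩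
    rcases lt_trichotomy (j:ℕ) (g - 1 - (n+1)) with hj | hj | hj
    · rw [if_pos (by omega), if_pos hj]
      exact h3 j (Fin.ne_of_val_ne (show (j:ℕ) ≠ g - 1 - (n+1) by omega))
        (Fin.ne_of_val_ne (show (j:ℕ) ≠ g - 1 - (n+1) + 1 by omega))
    · rw [if_pos (by omega), if_neg (by omega), dif_pos (by omega)]
      have hji : j = idx (⟨g - 1 - (n+1), hmlt'⟩ : Fin (g-1)) :=
        Fin.ext (show (j:ℕ) = g - 1 - (n+1) from hj)
      conv_lhs => rw [hji]
      rw [h1]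
      exact congrArg (fun t => -γ t)
        (Fin.ext (show g - 1 - (n+1) + 1 = (j:ℕ) + 1 by omega))
    · rw [if_neg (by omega), if_neg (by omega)]
      by_cases hjg : (j:ℕ) + 1 < g
      · rw [dif_pos hjg, dif_pos hjg, map_neg,
          h3 ⟨(j:ℕ)+1, hjg⟩ (Fin.ne_of_val_ne (show (j:ℕ)+1 ≠ g - 1 - (n+1) by omega))
            (Fin.ne_of_val_ne (show (j:ℕ)+1 ≠ g - 1 - (n+1) + 1 by omega))]
      · rw [dif_neg hjg, dif_neg hjg, map_add, map_zsmul, map_sum]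
        have e1 : (⟨g - 1 - n, by omega⟩ : Fin g)
            = idx1 (⟨g - 1 - (n+1), hmlt'⟩ : Fin (g-1)) :=
          Fin.ext (show g - 1 - n = g - 1 - (n+1) + 1 by omega)
        rw [e1, h2]
        have hsum : ∑ k ∈ Finset.univ.filter (fun k : Fin g => g - n ≤ (k:ℕ)),
            (T ⟨g - 1 - (n+1), hmlt'⟩) (γ k)
            = ∑ k ∈ Finset.univ.filter (fun k : Fin g => g - n ≤ (k:ℕ)), γ k := by
          refine Finset.sum_congr rfl (fun k hk => ?_)
          rw [Finset.mem_filter] at hk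
          exact h3 k (Fin.ne_of_val_ne (show (k:ℕ) ≠ g - 1 - (n+1) by omega))
            (Fin.ne_of_val_ne (show (k:ℕ) ≠ g - 1 - (n+1) + 1 by omega))
        rw [hsum]
        have hnm : idx1 (⟨g - 1 - (n+1), hmlt'⟩ : Fin (g-1))
            ∉ Finset.univ.filter (fun k : Fin g => g - n ≤ (k:ℕ)) := by
          simp only [Finset.mem_filter, Finset.mem_univ, true_and]
          show ¬ g - n ≤ g - 1 - (n+1) + 1
          omega
        have hins : Finset.univ.filter (fun k : Fin g => g - (n+1) ≤ (k:ℕ))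
            = insert (idx1 (⟨g - 1 - (n+1), hmlt'⟩ : Fin (g-1)))
                (Finset.univ.filter (fun k : Fin g => g - n ≤ (k:ℕ))) := by
          ext k
          have := k.isLt
          simp only [Finset.mem_filter, Finset.mem_univ, true_and, Finset.mem_insert,
            Fin.ext_iff, idx1, Fin.val_mk]
          omega
        rw [hins, Finset.sum_insert hnm, smul_add]
        have e0 : (⟨g - 1 - (n+1), by omega⟩ : Fin g)
            = idx (⟨g - 1 - (n+1), hmlt'⟩ : Fin (g-1)) := rfl
        rw [e0]
        abel

theorem stmt9 (g : ℕ) (hg : 3 ≤ g) (T : Fin (g-1) → AddAut (MN g)) (hT : IsT T) :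
    ∀ Y : AddAut (MN g), Y = -((List.ofFn T).sum) →
      (∀ i : Fin g, Y (γ i) = - γ (i - ⟨1, by omega⟩)) ∧
      (∀ (k : ℕ) (i : Fin g),
        (k • Y) (γ i) = (-1 : ℤ) ^ k • γ (i - ⟨k % g, Nat.mod_lt k (by omega)⟩)) := by
  intro Y hY
  haveI : NeZero g := ⟨by omega⟩
  have hX' : ∀ j : Fin g, ((List.ofFn T).sum) (γ j) =
      if h : (j:ℕ)+1 < g then -γ ⟨(j:ℕ)+1, h⟩ else -γ ⟨0, by omega⟩ := by
    intro j
    have hjlt := j.isLt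
    have h := key T hT (g-1) le_rfl j
    simp only [Nat.sub_self, List.drop_zero] at h
    rw [h, if_neg (by omega)]
    by_cases hc : (j:ℕ)+1 < g
    · rw [dif_pos hc, dif_pos hc]
    · rw [dif_neg hc, dif_neg hc]
      have hfe : Finset.univ.filter (fun k : Fin g => g - (g-1) ≤ (k:ℕ))
          = Finset.univ \ {(⟨0, by omega⟩ : Fin g)} := by
        ext k
        simp only [Finset.mem_filter, Finset.mem_univ, true_and, Finset.mem_sdiff,
          Finset.mem_singleton, Fin.ext_iff, Fin.val_mk]
        omega
      rw [hfe, Finset.sum_sdiff_eq_sub (Finset.subset_univ _), Finset.sum_singleton,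
        smul_sub, two_sum_gamma, two_zsmul]
      have e2 : (⟨0, by omega⟩ : Fin g) = (⟨0, show 0 < g by omega⟩ : Fin g) := rfl
      abel
  have part1 : ∀ i : Fin g, Y (γ i) = - γ (i - ⟨1, by omega⟩) := by
    intro i
    have hji : (i - ⟨1, by omega⟩) + (⟨1, by omega⟩ : Fin g) = i := sub_add_cancel i _
    have hvi := congrArg Fin.val hji
    rw [Fin.val_add] at hvi
    simp only [Fin.val_mk] at hvi
    have hXj : ((List.ofFn T).sum) (γ (i - ⟨1, by omega⟩)) = - γ i := by
      rw [hX' _]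
      by_cases hc : ((i - ⟨1, by omega⟩ : Fin g) : ℕ) + 1 < g
      · rw [dif_pos hc]
        refine congrArg (fun t => -γ t) (Fin.ext ?_)
        show ((i - ⟨1, by omega⟩ : Fin g) : ℕ) + 1 = (i : ℕ)
        rw [← hvi, Nat.mod_eq_of_lt hc]
      · rw [dif_neg hc]
        have h2 := (i - ⟨1, by omega⟩ : Fin g).isLt
        refine congrArg (fun t => -γ t) (Fin.ext ?_)
        show (0 : ℕ) = (i : ℕ)
        rw [show ((i - ⟨1, by omega⟩ : Fin g) : ℕ) + 1 = g by omega, Nat.mod_self] at hvi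
        exact hvi
    rw [hY]
    have hgi : γ i = ((List.ofFn T).sum) (- γ (i - ⟨1, by omega⟩)) := by
      rw [map_neg, hXj, neg_neg]
    rw [hgi, ← AddAut.add_apply, neg_add_cancel, AddAut.zero_apply]
  refine ⟨part1, ?_⟩
  intro k
  induction k with
  | zero =>
    intro i
    rw [zero_nsmul, pow_zero, AddAut.zero_apply, one_smul]
    refine (congrArg γ (Fin.ext ?_)).symm
    rw [Fin.sub_def]
    show (g - 0 % g + (i:ℕ)) % g = (i:ℕ)
    rw [Nat.zero_mod, Nat.sub_zero, Nat.add_mod_left, Nat.mod_eq_of_lt i.isLt]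
  | succ k ih =>
    intro i
    rw [succ_nsmul, AddAut.add_apply, part1 i, map_neg, ih, pow_succ, mul_smul,
      neg_one_zsmul, smul_neg]
    have hidx : (i - ⟨1, by omega⟩) - (⟨k % g, Nat.mod_lt k (by omega)⟩ : Fin g)
        = i - ⟨(k+1) % g, Nat.mod_lt (k+1) (by omega)⟩ := by
      rw [sub_sub]
      refine congrArg (fun t => i - t) (Fin.ext ?_)
      rw [Fin.val_add]
      show (1 + k % g) % g = (k + 1) % g
      conv_rhs => rw [Nat.add_comm, Nat.add_mod, Nat.mod_eq_of_lt (show 1 < g by omega)]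
    rw [hidx]
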